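/- In the link-layer receiver state machine with threshold c̄+1 and an initial adversarial state (arbitrary LastMessage and Counter ≤ c̄+1, plus at most c̄ adversarial messages initially in the channel), at most 3 of the messages delivered by the receiver can be ghost messages (messages never sent by the sender after the fault); in particular the 4th delivered message was genuinely sent. -/

import Mathlib

/-- Receiver state: last message seen (or none) and a counter. -/
structure RState (α : Type*) where
  last : Option α
  counter : ℕ

/-- One step of the link-layer receiver with threshold `c̄ + 1`: returns the
new state and whether the message was delivered. -/
def rstep {α : Type*} [DecidableEq α] (cbar : ℕ) (s : RState α) (msg : α) :
    RState α × Bool :=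
  if s.last = some msg then
    if s.counter + 1 ≥ cbar + 1 then (⟨none, 0⟩, true)
    else (⟨some msg, s.counter + 1⟩, false)
  else (⟨some msg, 1⟩, false)

/-- Count ghost deliveries while processing a stream of tagged messages
(`true` = this copy comes from a genuine send). `seen` records messages for
which a genuine copy has already appeared; a delivery is ghost if no genuine
send of that message precedes it. -/
def ghostCount {α : Type*} [DecidableEq α] (cbar : ℕ) :
    RState α → List α → List (α × Bool) → ℕ
  | _, _, [] => 0
  | s, seen, (m, g) :: rest =>
      let seen' := if g then m :: seen else seen
      (if (rstep cbar s m).2 ∧ m ∉ seen' then 1 else 0) +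
        ghostCount cbar (rstep cbar s m).1 seen' rest
def credit {α : Type*} [DecidableEq α] (s : RState α) (seen : List α) : ℕ :=
  match s.last with
  | some m => if m ∈ seen then 0 else s.counter
  | none => 0

lemma credit_none {α : Type*} [DecidableEq α] (c : ℕ) (seen : List α) :
    credit (⟨none, c⟩ : RState α) seen = 0 := rfl

lemma credit_some {α : Type*} [DecidableEq α] (m : α) (c : ℕ) (seen : List α) :
    credit (⟨some m, c⟩ : RState α) seen = if m ∈ seen then 0 else c := rfl

lemma credit_of_last {α : Type*} [DecidableEq α] (s : RState α) (m : α)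
    (seen : List α) (h : s.last = some m) :
    credit s seen = if m ∈ seen then 0 else s.counter := by
  unfold credit; rw [h]

lemma key_bound {α : Type*} [DecidableEq α] (cbar : ℕ) :
    ∀ (L : List (α × Bool)) (s : RState α) (seen : List α),
      (cbar + 1) * ghostCount cbar s seen L ≤
        (L.filter (fun e => !e.2)).length + credit s seen := by
  intro L
  induction L with
  | nil => intro s seen; simp [ghostCount]
  | cons e rest ih =>
    obtain ⟨m, g⟩ := e
    intro s seen
    cases g with
    | true =>
      have hflt : (List.filter (fun e => !e.2) ((m, true) :: rest)).length
          = (List.filter (fun e => !e.2) rest).length := by simp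
      have hmem : m ∈ (m :: seen) := List.mem_cons_self (a := m) (l := seen)
      have hgc : ghostCount cbar s seen ((m, true) :: rest)
          = ghostCount cbar (rstep cbar s m).1 (m :: seen) rest := by
        simp [ghostCount, hmem]
      rw [hgc, hflt]
      have hcnew : credit (rstep cbar s m).1 (m :: seen) = 0 := by
        by_cases h1 : s.last = some m
        · by_cases h2 : cbar + 1 ≤ s.counter + 1
          · simp [rstep, h1, h2, credit_none]
          · simp [rstep, h1, h2, credit_some]
        · simp [rstep, h1, credit_some]
      have := ih (rstep cbar s m).1 (m :: seen)
      omega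
    | false =>
      have hflt : (List.filter (fun e => !e.2) ((m, false) :: rest)).length
          = (List.filter (fun e => !e.2) rest).length + 1 := by simp
      rw [hflt]
      by_cases h1 : s.last = some m
      · by_cases h2 : cbar + 1 ≤ s.counter + 1
        · -- delivery
          have hstep : rstep cbar s m = (⟨none, 0⟩, true) := by
            simp [rstep, h1, h2]
          by_cases hm : m ∈ seen
          · have hgc : ghostCount cbar s seen ((m, false) :: rest)
                = ghostCount cbar (⟨none, 0⟩ : RState α) seen rest := by
              simp [ghostCount, hstep, hm]
            rw [hgc]
            have := ih (⟨none, 0⟩ : RState α) seen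
            rw [credit_none] at this
            omega
          · have hgc : ghostCount cbar s seen ((m, false) :: rest)
                = 1 + ghostCount cbar (⟨none, 0⟩ : RState α) seen rest := by
              simp [ghostCount, hstep, hm]
            rw [hgc, Nat.mul_add, Nat.mul_one]
            have := ih (⟨none, 0⟩ : RState α) seen
            rw [credit_none] at this
            have hc : credit s seen = s.counter := by
              rw [credit_of_last s m seen h1, if_neg hm]
            omega
        · -- counter increment
          have hstep : rstep cbar s m = (⟨some m, s.counter + 1⟩, false) := by
            simp [rstep, h1, h2]
          have hgc : ghostCount cbar s seen ((m, false) :: rest)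
              = ghostCount cbar (⟨some m, s.counter + 1⟩ : RState α) seen rest := by
            simp [ghostCount, hstep]
          rw [hgc]
          have := ih (⟨some m, s.counter + 1⟩ : RState α) seen
          rw [credit_some] at this
          rw [credit_of_last s m seen h1]
          by_cases hm : m ∈ seen <;> simp [hm] at this ⊢ <;> omega
      · -- new message
        have hstep : rstep cbar s m = (⟨some m, 1⟩, false) := by
          simp [rstep, h1]
        have hgc : ghostCount cbar s seen ((m, false) :: rest)
            = ghostCount cbar (⟨some m, 1⟩ : RState α) seen rest := by
          simp [ghostCount, hstep]
        rw [hgc]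
        have := ih (⟨some m, 1⟩ : RState α) seen
        rw [credit_some] at this
        by_cases hm : m ∈ seen <;> simp [hm] at this <;> omega

theorem at_most_three_ghosts {α : Type*} [DecidableEq α] (cbar : ℕ)
    (s₀ : RState α) (hcnt : s₀.counter ≤ cbar + 1)
    (L : List (α × Bool))
    (hfake : (L.filter (fun e => !e.2)).length ≤ cbar)
    (sends : List α)
    (hgen : L.filterMap (fun e => if e.2 then some e.1 else none) =
      (sends.map (fun m => List.replicate (cbar + 1) m)).flatten) :
    ghostCount cbar s₀ [] L ≤ 3 := by
  have hkey := key_bound cbar L s₀ []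
  have hcred : credit s₀ ([] : List α) ≤ cbar + 1 := by
    unfold credit
    cases h : s₀.last <;> simp [hcnt]
  by_contra h
  push_neg at h
  have h4 : 4 ≤ ghostCount cbar s₀ [] L := h
  have hmul : (cbar + 1) * 4 ≤ (cbar + 1) * ghostCount cbar s₀ [] L :=
    Nat.mul_le_mul_left _ h4
  omega
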